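/- arXiv:2211.03739 — 7 statements merged into one kernel-verified Lean document; each statement's English description precedes it below -/
import Mathlib

section
/- Let (X, Σ, μ) be a measure space and let ξ₁, ξ₂ ∈ L²(X, μ). Then for all but at most countably many λ ∈ ℂ, the support of ξ₁ + λ·ξ₂ equals supp(ξ₁) ∪ supp(ξ₂) up to a μ-null set; that is, the set {λ ∈ ℂ : μ((supp(ξ₁) ∪ supp(ξ₂)) \ supp(ξ₁ + λξ₂)) ≠ 0} is countable. -/
open MeasureTheory

/-- For `ξ₁ ξ₂ ∈ L²(X, μ)`, for all but countably many `λ ∈ ℂ` the support of `ξ₁ + λξ₂`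
equals `supp ξ₁ ∪ supp ξ₂` up to a `μ`-null set. -/
theorem countable_bad_lambdas {X : Type*} [MeasurableSpace X] (μ : Measure X)
    (ξ₁ ξ₂ : Lp ℂ 2 μ) :
    {l : ℂ | μ ((Function.support ⇑ξ₁ ∪ Function.support ⇑ξ₂) \
        Function.support ⇑(ξ₁ + l • ξ₂)) ≠ 0}.Countable := by
  classical
  -- measurable representatives
  set f : X → ℂ := (Lp.aestronglyMeasurable ξ₁).mk ⇑ξ₁ with hf_def
  set g : X → ℂ := (Lp.aestronglyMeasurable ξ₂).mk ⇑ξ₂ with hg_def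
  have hf_meas : Measurable f := (Lp.aestronglyMeasurable ξ₁).stronglyMeasurable_mk.measurable
  have hg_meas : Measurable g := (Lp.aestronglyMeasurable ξ₂).stronglyMeasurable_mk.measurable
  have hf_ae : ⇑ξ₁ =ᵐ[μ] f := (Lp.aestronglyMeasurable ξ₁).ae_eq_mk
  have hg_ae : ⇑ξ₂ =ᵐ[μ] g := (Lp.aestronglyMeasurable ξ₂).ae_eq_mk
  -- a σ-finite set carrying ξ₂
  obtain ⟨t, ht, hzero, htfin⟩ :=
    ((Lp.memLp ξ₂).aefinStronglyMeasurable two_ne_zero ENNReal.ofNat_ne_top).exists_set_sigmaFinite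
  haveI : SigmaFinite (μ.restrict t) := htfin
  have hzero' : ∀ᵐ x ∂μ, x ∈ tᶜ → ξ₂ x = 0 := (ae_restrict_iff' ht.compl).mp hzero
  -- the disjoint family of measurable sets
  set T : ℂ → Set X := fun l => {x | g x ≠ 0 ∧ f x + l * g x = 0} with hT_def
  have hT_meas : ∀ l, MeasurableSet (T l) := by
    intro l
    exact (hg_meas (measurableSet_singleton 0)).compl.inter
      ((hf_meas.add (hg_meas.const_mul l)) (measurableSet_singleton 0))
  have hT_disj : Pairwise (Function.onFun Disjoint T) := by
    intro l₁ l₂ hne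
    rw [Function.onFun, Set.disjoint_left]
    rintro x ⟨hgx, h1⟩ ⟨-, h2⟩
    apply hne
    have : l₁ * g x = l₂ * g x := by
      have := h1.trans h2.symm
      linear_combination this
    exact mul_right_cancel₀ hgx this
  -- the key inclusion
  have key : {l : ℂ | μ ((Function.support ⇑ξ₁ ∪ Function.support ⇑ξ₂) \
      Function.support ⇑(ξ₁ + l • ξ₂)) ≠ 0} ⊆ {l : ℂ | 0 < μ.restrict t (T l)} := by
    intro l hl
    simp only [Set.mem_setOf_eq] at hl ⊢
    have hcoe : ⇑(ξ₁ + l • ξ₂) =ᵐ[μ] fun x => ξ₁ x + l * ξ₂ x := by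
      filter_upwards [Lp.coeFn_add ξ₁ (l • ξ₂), Lp.coeFn_smul l ξ₂] with x h1 h2
      simp only [h1, Pi.add_apply, h2, Pi.smul_apply, smul_eq_mul]
    have hsub : ∀ᵐ x ∂μ, x ∈ (Function.support ⇑ξ₁ ∪ Function.support ⇑ξ₂) \
        Function.support ⇑(ξ₁ + l • ξ₂) → x ∈ T l ∩ t := by
      filter_upwards [hcoe, hf_ae, hg_ae, hzero'] with x h1 h2 h3 h4
      rintro ⟨hx_supp, hx_not⟩
      simp only [Function.mem_support, not_not] at hx_not
      have hsum : ξ₁ x + l * ξ₂ x = 0 := by rw [← h1]; exact hx_not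
      have hg2 : ξ₂ x ≠ 0 := by
        intro h0
        rcases hx_supp with h | h
        · apply h; simpa [h0] using hsum
        · exact h h0
      have hxt : x ∈ t := by
        by_contra hxt
        exact hg2 (h4 hxt)
      exact ⟨⟨by rw [← h3]; exact hg2, by rw [← h2, ← h3]; exact hsum⟩, hxt⟩
    have hle : μ ((Function.support ⇑ξ₁ ∪ Function.support ⇑ξ₂) \
        Function.support ⇑(ξ₁ + l • ξ₂)) ≤ μ (T l ∩ t) := by
      calc μ ((Function.support ⇑ξ₁ ∪ Function.support ⇑ξ₂) \
            Function.support ⇑(ξ₁ + l • ξ₂))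
          ≤ μ (T l ∩ t ∪ {x | ¬ (x ∈ (Function.support ⇑ξ₁ ∪ Function.support ⇑ξ₂) \
              Function.support ⇑(ξ₁ + l • ξ₂) → x ∈ T l ∩ t)}) := by
            apply measure_mono
            intro x hx
            by_cases hgood : x ∈ (Function.support ⇑ξ₁ ∪ Function.support ⇑ξ₂) \
                Function.support ⇑(ξ₁ + l • ξ₂) → x ∈ T l ∩ t
            · exact Or.inl (hgood hx)
            · exact Or.inr hgood
        _ ≤ μ (T l ∩ t) + μ {x | ¬ (x ∈ (Function.support ⇑ξ₁ ∪ Function.support ⇑ξ₂) \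
              Function.support ⇑(ξ₁ + l • ξ₂) → x ∈ T l ∩ t)} := measure_union_le _ _
        _ = μ (T l ∩ t) := by
            rw [ae_iff.mp hsub, add_zero]
    rw [Measure.restrict_apply (hT_meas l)]
    exact lt_of_le_of_lt (by simp) (lt_of_le_of_ne zero_le (fun h => hl (le_antisymm
      (hle.trans_eq h.symm) zero_le)))
  exact (Measure.countable_meas_pos_of_disjoint_iUnion hT_meas hT_disj).mono key
end

section
/- Let (X, Σ, μ) be a measure space and let (ξ_n)_{n≥1} be a sequence in L²(X, μ). Then there exist constants (λ_n)_{n≥1} ⊆ ℂ such that for every N ∈ ℕ, supp(∑_{n=1}^N λ_n ξ_n) equals ⋃_{n=1}^N supp(ξ_n) up to a μ-null set. -/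
open MeasureTheory

private lemma key_meas {X : Type*} [MeasurableSpace X] {μ : Measure X}
    {f g : X → ℂ} (hf : Measurable f) (hg : Measurable g) (hg2 : MemLp g 2 μ) :
    ∃ c : ℂ, c ≠ 0 ∧ μ {x | g x ≠ 0 ∧ f x + c * g x = 0} = 0 := by
  set ν := μ.withDensity (fun x => (‖g x‖₊ : ENNReal) ^ 2) with hν
  have hint : Integrable (fun x => ‖g x‖ ^ 2) μ :=
    (memLp_two_iff_integrable_sq_norm hg2.1).1 hg2
  have hfin : IsFiniteMeasure ν := by
    constructor
    rw [hν, withDensity_apply _ MeasurableSet.univ, setLIntegral_univ]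
    have h2 := hint.2
    rw [HasFiniteIntegral] at h2
    have heq : (fun x => (‖g x‖₊ : ENNReal) ^ 2) = fun a => ((‖‖g a‖ ^ 2‖₊ : NNReal) : ENNReal) := by
      funext a
      rw [nnnorm_pow, nnnorm_norm]
      push_cast
      ring
    rw [heq]
    exact h2
  set A : ℂ → Set X := fun c => {x | g x ≠ 0 ∧ f x + c * g x = 0} with hA
  have hAm : ∀ c, MeasurableSet (A c) := by
    intro c
    exact ((hg (measurableSet_singleton 0)).compl).inter
      ((hf.add (hg.const_mul c)) (measurableSet_singleton 0))
  have hdisj : Pairwise (Function.onFun Disjoint A) := by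
    intro c c' hcc
    rw [Function.onFun, Set.disjoint_left]
    rintro x ⟨hgx, h1⟩ ⟨_, h2⟩
    apply hcc
    have : c * g x = c' * g x := by
      have := h1.trans h2.symm
      linear_combination this
    exact mul_right_cancel₀ hgx this
  have hcount : Set.Countable {c : ℂ | 0 < ν (A c)} :=
    Measure.countable_meas_pos_of_disjoint_iUnion hAm hdisj
  obtain ⟨c, hc⟩ : ∃ c : ℂ, c ∉ insert (0 : ℂ) {c : ℂ | 0 < ν (A c)} := by
    by_contra h
    push_neg at h
    have : (Set.univ : Set ℂ).Countable := by
      refine Set.Countable.mono ?_ (hcount.insert 0)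
      intro c _; exact h c
    exact not_countable_complex this
  simp only [Set.mem_insert_iff, Set.mem_setOf_eq, not_or, not_lt, nonpos_iff_eq_zero] at hc
  refine ⟨c, hc.1, ?_⟩
  have hν0 : ν (A c) = 0 := hc.2
  rw [hν, withDensity_apply _ (hAm c)] at hν0
  have hae : ∀ᵐ x ∂(μ.restrict (A c)), (‖g x‖₊ : ENNReal) ^ 2 = 0 := by
    have hm : Measurable (fun x => (‖g x‖₊ : ENNReal) ^ 2) := hg.nnnorm.coe_nnreal_ennreal.pow_const 2
    exact (lintegral_eq_zero_iff hm).1 hν0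
  have hae2 : μ.restrict (A c) {x | g x ≠ 0} = 0 := by
    have : ∀ᵐ x ∂(μ.restrict (A c)), g x = 0 := by
      filter_upwards [hae] with x hx
      simpa using hx
    exact this
  have h3 : μ.restrict (A c) (A c) = 0 :=
    measure_mono_null (fun x hx => hx.1) hae2
  rw [Measure.restrict_apply_self] at h3
  exact h3

private lemma key_ae {X : Type*} [MeasurableSpace X] {μ : Measure X}
    (f g : X → ℂ) (hf : AEStronglyMeasurable f μ) (hg2 : MemLp g 2 μ) :
    ∃ c : ℂ, c ≠ 0 ∧ μ {x | g x ≠ 0 ∧ f x + c * g x = 0} = 0 := by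
  have hg : AEStronglyMeasurable g μ := hg2.1
  have hg2' : MemLp (hg.mk g) 2 μ := hg2.ae_eq hg.ae_eq_mk
  obtain ⟨c, hc0, hc⟩ := key_meas hf.stronglyMeasurable_mk.measurable
    hg.stronglyMeasurable_mk.measurable hg2'
  refine ⟨c, hc0, ?_⟩
  have hsets : {x | g x ≠ 0 ∧ f x + c * g x = 0}
      =ᵐ[μ] {x | hg.mk g x ≠ 0 ∧ hf.mk f x + c * hg.mk g x = 0} := by
    rw [Filter.eventuallyEq_set]
    filter_upwards [hf.ae_eq_mk, hg.ae_eq_mk] with x h1 h2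
    simp [Set.mem_setOf_eq, h1, h2]
  rw [measure_congr hsets]
  exact hc


/-- For any sequence `(ξ_n)_{n ≥ 1}` in `L²(X, μ)` there are constants `(λ_n)` such that for
every `N`, the support of `∑_{n=1}^N λ_n ξ_n` equals `⋃_{n=1}^N supp(ξ_n)` up to a null set. -/
theorem exists_coeffs_support_eq_union {X : Type*} [MeasurableSpace X] (μ : Measure X)
    (ξ : ℕ → Lp ℂ 2 μ) :
    ∃ l : ℕ → ℂ, ∀ N : ℕ,
      μ (symmDiff (Function.support ⇑(∑ n ∈ Finset.Icc 1 N, l n • ξ n))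
          (⋃ n ∈ Finset.Icc 1 N, Function.support ⇑(ξ n))) = 0 := by
  classical
  have key : ∀ (S : Lp ℂ 2 μ) (n : ℕ), ∃ c : ℂ, c ≠ 0 ∧
      μ {x | (ξ n : X → ℂ) x ≠ 0 ∧ (S : X → ℂ) x + c * (ξ n : X → ℂ) x = 0} = 0 :=
    fun S n => key_ae _ _ (Lp.aestronglyMeasurable S) (Lp.memLp (ξ n))
  choose c hc0 hc using key
  -- recursively build (coefficient, partial sum)
  let L : ℕ → ℂ × Lp ℂ 2 μ := fun N => Nat.rec ((1 : ℂ), (0 : Lp ℂ 2 μ))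
    (fun n p => (c p.2 (n + 1), p.2 + c p.2 (n + 1) • ξ (n + 1))) N
  set l : ℕ → ℂ := fun n => (L n).1 with hl
  have hsum : ∀ N, (∑ n ∈ Finset.Icc 1 N, l n • ξ n) = (L N).2 := by
    intro N
    induction N with
    | zero =>
      rw [show Finset.Icc 1 0 = ∅ by rfl, Finset.sum_empty]
      rfl
    | succ N ih =>
      rw [Finset.sum_Icc_succ_top (by omega), ih]
  have main : ∀ N, Function.support ⇑((L N).2)
      =ᵐ[μ] ⋃ n ∈ Finset.Icc 1 N, Function.support ⇑(ξ n) := by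
    intro N
    induction N with
    | zero =>
      have h0 : (L 0).2 = (0 : Lp ℂ 2 μ) := rfl
      rw [h0, show Finset.Icc 1 0 = ∅ by rfl]
      rw [Filter.eventuallyEq_set]
      filter_upwards [Lp.coeFn_zero (E := ℂ) (p := 2) (μ := μ)] with x hx
      simp only [Function.mem_support, ne_eq]
      constructor
      · intro h; exact absurd hx h
      · intro h; simp at h
    | succ N ih =>
      set S := (L N).2 with hS
      set c' := c S (N + 1) with hc'
      have hL : (L (N + 1)).2 = S + c' • ξ (N + 1) := rfl
      have hadd : ⇑(L (N + 1)).2 =ᵐ[μ]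
          fun x => (S : X → ℂ) x + c' * (ξ (N + 1) : X → ℂ) x := by
        rw [hL]
        filter_upwards [Lp.coeFn_add S (c' • ξ (N + 1)),
          Lp.coeFn_smul c' (ξ (N + 1))] with x h1 h2
        rw [h1, Pi.add_apply, h2]
        simp [smul_eq_mul]
      have hnull : ∀ᵐ x ∂μ,
          ¬((ξ (N + 1) : X → ℂ) x ≠ 0 ∧ (S : X → ℂ) x + c' * (ξ (N + 1) : X → ℂ) x = 0) := by
        rw [ae_iff]
        simpa using hc S (N + 1)
      rw [Filter.eventuallyEq_set] at ih ⊢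
      filter_upwards [ih, hadd, hnull] with x hih hx hnx
      simp only [Function.mem_support, hx]
      simp only [Function.mem_support, Set.mem_iUnion, exists_prop, Finset.mem_Icc] at hih ⊢
      constructor
      · intro hne
        by_cases hg : (ξ (N + 1) : X → ℂ) x = 0
        · rw [hg, mul_zero, add_zero] at hne
          obtain ⟨n, hn, hn2⟩ := hih.1 hne
          exact ⟨n, ⟨hn.1, by omega⟩, hn2⟩
        · exact ⟨N + 1, ⟨by omega, le_refl _⟩, hg⟩
      · rintro ⟨n, ⟨hn1, hn2⟩, hne⟩
        by_cases hg : (ξ (N + 1) : X → ℂ) x = 0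
        · rw [hg, mul_zero, add_zero]
          have hnN : n ≤ N := by
            rcases Nat.lt_or_ge n (N + 1) with h | h
            · omega
            · exfalso; have : n = N + 1 := by omega
              rw [this] at hne; exact hne hg
          exact hih.2 ⟨n, ⟨hn1, hnN⟩, hne⟩
        · intro h0
          exact hnx ⟨hg, h0⟩
  refine ⟨l, fun N => ?_⟩
  rw [hsum N, measure_symmDiff_eq_zero_iff]
  exact main N
end

section
/- The ideal of compact operators K(ℓ²(ℕ)) is strictly contained in C_RC, and C_RC is strictly contained in B(ℓ²(ℕ)). -/
noncomputable section

/-- The Hilbert space `ℓ²(ℕ)`. -/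
abbrev l2N : Type := lp (fun _ : ℕ => ℂ) 2

/-- The matrix entry `a_{n,m} = ⟨a δ_m, δ_n⟩`, i.e. the `n`-th coordinate of `a δ_m`. -/
def entry (a : l2N →L[ℂ] l2N) (n m : ℕ) : ℂ := (a (lp.single 2 m 1)) n

/-- `a` is uniformly row and column finite: some `N` bounds the number of nonzero entries
in every column and every row of its matrix. -/
def RCFinite (a : l2N →L[ℂ] l2N) : Prop :=
  ∃ N : ℕ, ∀ m : ℕ,
    {n : ℕ | entry a n m ≠ 0}.encard ≤ (N : ℕ∞) ∧
    {n : ℕ | entry a m n ≠ 0}.encard ≤ (N : ℕ∞)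

/-- `C_RC`, the operator-norm closure of the uniformly RC-finite operators. -/
def C_RC : Set (l2N →L[ℂ] l2N) := closure {a | RCFinite a}


set_option maxHeartbeats 1000000
open scoped ENNReal

lemma two_toReal : (2 : ℝ≥0∞).toReal = 2 := by norm_num
lemma two_toReal_pos : 0 < (2 : ℝ≥0∞).toReal := by norm_num

/-- coordinate functional -/
def coordCLM (n : ℕ) : l2N →L[ℂ] ℂ :=
  LinearMap.mkContinuous
    { toFun := fun f => f n
      map_add' := fun f g => by simp [lp.coeFn_add]
      map_smul' := fun c f => by simp [lp.coeFn_smul] }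
    1 (fun f => by
      show ‖f n‖ ≤ 1 * ‖f‖; simpa using lp.norm_apply_le_norm (by norm_num : (2:ℝ≥0∞) ≠ 0) f n)

@[simp] lemma coordCLM_apply (n : ℕ) (f : l2N) : coordCLM n f = f n := rfl

lemma lp_single_add (n : ℕ) (a b : ℂ) :
    lp.single 2 n (a + b) = (lp.single 2 n a : l2N) + lp.single 2 n b := by
  apply lp.ext
  funext j
  by_cases h : j = n
  · subst h; simp [lp.single_apply_self, lp.coeFn_add]
  · simp [lp.single_apply_ne _ _ _ h, lp.coeFn_add]

def singleCLM (n : ℕ) : ℂ →L[ℂ] l2N :=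
  LinearMap.mkContinuous
    { toFun := fun c => lp.single 2 n c
      map_add' := fun a b => lp_single_add n a b
      map_smul' := fun c a => by simpa using lp.single_smul (E := fun _ : ℕ => ℂ) 2 n c a }
    1 (fun c => by
      simpa using le_of_eq (lp.norm_single (by norm_num : (0:ℝ≥0∞) < 2) n c))

@[simp] lemma singleCLM_apply (n : ℕ) (c : ℂ) : singleCLM n c = lp.single 2 n c := rfl

/-- truncation operator to a finite set of coordinates -/
def QCLM (s : Finset ℕ) : l2N →L[ℂ] l2N := ∑ i ∈ s, (singleCLM i).comp (coordCLM i)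

lemma QCLM_apply (s : Finset ℕ) (f : l2N) :
    QCLM s f = ∑ i ∈ s, lp.single 2 i (f i) := by
  simp [QCLM, ContinuousLinearMap.sum_apply]

lemma norm_sub_QCLM_le (s : Finset ℕ) (f : l2N) : ‖f - QCLM s f‖ ≤ ‖f‖ := by
  have h := lp.norm_compl_sum_single (E := fun _ : ℕ => ℂ) two_toReal_pos f s
  rw [← QCLM_apply] at h
  have hnn : (0:ℝ) ≤ ∑ i ∈ s, ‖f i‖ ^ (2:ℝ≥0∞).toReal :=
    Finset.sum_nonneg fun i _ => Real.rpow_nonneg (norm_nonneg _) _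
  have h2 : ‖f - QCLM s f‖ ^ (2:ℝ≥0∞).toReal ≤ ‖f‖ ^ (2:ℝ≥0∞).toReal := by
    rw [h]; linarith
  exact (Real.rpow_le_rpow_iff (norm_nonneg _) (norm_nonneg _) two_toReal_pos).mp h2

lemma tendsto_QCLM (f : l2N) :
    Filter.Tendsto (fun k => QCLM (Finset.range k) f) Filter.atTop (nhds f) := by
  have h := (lp.hasSum_single (E := fun _ : ℕ => ℂ) (by norm_num : (2:ℝ≥0∞) ≠ ⊤) f)
  have h2 := h.tendsto_sum_nat
  simpa [QCLM_apply] using h2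

open ComplexConjugate

local notation "⟪" x ", " y "⟫" => @inner ℂ _ _ x y

lemma inner_single_one (n : ℕ) (f : l2N) : ⟪(lp.single 2 n 1 : l2N), f⟫ = f n := by
  rw [lp.inner_single_left]
  simp

lemma QCLM_coe (s : Finset ℕ) (f : l2N) (n : ℕ) :
    (QCLM s f) n = if n ∈ s then f n else 0 := by
  rw [QCLM_apply, lp.coeFn_sum, Finset.sum_apply]
  simp only [lp.single_apply]
  simp [Pi.single_apply]

lemma inner_QCLM (s : Finset ℕ) (v x : l2N) : ⟪QCLM s v, x⟫ = ⟪v, QCLM s x⟫ := by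
  rw [QCLM_apply, QCLM_apply, sum_inner, inner_sum]
  refine Finset.sum_congr rfl fun i _ => ?_
  rw [lp.inner_single_left, lp.inner_single_right]

lemma QCLM_single_not_mem (s : Finset ℕ) (n : ℕ) (h : n ∉ s) :
    QCLM s (lp.single 2 n 1) = 0 := by
  apply lp.ext
  funext i
  rw [QCLM_coe]
  by_cases hi : i ∈ s
  · rw [if_pos hi, lp.single_apply_ne]
    · rfl
    · rintro rfl; exact h hi
  · rw [if_neg hi]; rfl

lemma RCFinite_truncated (a : l2N →L[ℂ] l2N) (k j : ℕ) :
    RCFinite ((QCLM (Finset.range k)).comp (a.comp (QCLM (Finset.range j)))) := by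
  refine ⟨max k j, fun m => ⟨?_, ?_⟩⟩
  · refine le_trans (Set.encard_le_encard (t := ↑(Finset.range k)) (fun n hn => ?_)) ?_
    · show n ∈ (Finset.range k : Finset ℕ)
      by_contra hnk
      apply hn
      show ((QCLM (Finset.range k)) (a (QCLM (Finset.range j) (lp.single 2 m 1)))) n = 0
      rw [QCLM_coe, if_neg hnk]
    · rw [Set.encard_coe_eq_coe_finsetCard, Finset.card_range]
      exact_mod_cast Nat.cast_le.mpr (le_max_left k j)
  · refine le_trans (Set.encard_le_encard (t := ↑(Finset.range j)) (fun n hn => ?_)) ?_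
    · show n ∈ (Finset.range j : Finset ℕ)
      by_contra hnj
      apply hn
      show ((QCLM (Finset.range k)) (a (QCLM (Finset.range j) (lp.single 2 n 1)))) m = 0
      rw [QCLM_single_not_mem _ _ hnj, map_zero, map_zero]
      rfl
    · rw [Set.encard_coe_eq_coe_finsetCard, Finset.card_range]
      exact_mod_cast Nat.cast_le.mpr (le_max_right k j)

lemma RCFinite_id : RCFinite (ContinuousLinearMap.id ℂ l2N) := by
  refine ⟨1, fun m => ⟨?_, ?_⟩⟩
  · refine le_trans (Set.encard_le_encard (t := {m}) (fun n hn => ?_)) ?_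
    · show n ∈ ({m} : Set ℕ)
      by_contra hnm
      exact hn (lp.single_apply_ne 2 m 1 hnm)
    · simpa using le_refl (1 : ℕ∞)
  · refine le_trans (Set.encard_le_encard (t := {m}) (fun n hn => ?_)) ?_
    · show n ∈ ({m} : Set ℕ)
      by_contra hnm
      apply hn
      show (lp.single 2 n 1 : l2N) m = 0
      exact lp.single_apply_ne 2 n 1 (by tauto)
    · simpa using le_refl (1 : ℕ∞)

lemma linearIndependent_single :
    LinearIndependent ℂ (fun n : ℕ => (lp.single 2 n 1 : l2N)) := by
  rw [linearIndependent_iff']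
  intro s g hsum i hi
  have := congrFun (congrArg (fun (f : l2N) => (f : ℕ → ℂ)) hsum) i
  simp only [lp.coeFn_sum, Finset.sum_apply, lp.coeFn_smul, Pi.smul_apply,
    lp.single_apply, smul_eq_mul] at this
  simpa [Pi.single_apply, Finset.sum_dite_eq', hi] using this

lemma not_isCompactOperator_id :
    ¬ IsCompactOperator (ContinuousLinearMap.id ℂ l2N) := by
  intro h
  obtain ⟨K, hK, hmem⟩ := h
  rw [Metric.mem_nhds_iff] at hmem
  obtain ⟨ε, hε, hball⟩ := hmem
  have hsub : Metric.closedBall (0 : l2N) (ε/2) ⊆ K := by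
    refine subset_trans ?_ hball
    intro x hx
    simp only [Metric.mem_closedBall, Metric.mem_ball] at hx ⊢
    · calc dist x 0 ≤ ε/2 := hx
        _ < ε := by linarith
  have hcompact : IsCompact (Metric.closedBall (0 : l2N) (ε/2)) :=
    hK.of_isClosed_subset Metric.isClosed_closedBall hsub
  have hfd : FiniteDimensional ℂ l2N :=
    FiniteDimensional.of_isCompact_closedBall ℂ (by linarith : (0:ℝ) < ε/2) hcompact
  exact Module.Finite.not_linearIndependent_of_infinite _ linearIndependent_single

lemma norm_QCLM_apply_le (k : Finset ℕ) (f : l2N) :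
    ‖QCLM k f‖ ≤ ∑ n ∈ k, ‖f n‖ := by
  rw [QCLM_apply]
  refine le_trans (norm_sum_le _ _) (le_of_eq ?_)
  exact Finset.sum_congr rfl fun n _ =>
    lp.norm_single (E := fun _ : ℕ => ℂ) (by norm_num : (0:ℝ≥0∞) < 2) n (f n)

lemma compact_mem_CRC {a : l2N →L[ℂ] l2N} (ha : IsCompactOperator (⇑a)) :
    a ∈ C_RC := by
  rw [C_RC, Metric.mem_closure_iff]
  intro ε hε
  set ε₁ : ℝ := ε/8 with hε₁def
  have hε₁ : 0 < ε₁ := by positivity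
  -- compact set containing the image of the closed unit ball
  have hK : IsCompact (closure (⇑a '' Metric.closedBall 0 1)) :=
    ha.isCompact_closure_image_of_isVonNBounded
      (NormedSpace.isVonNBounded_closedBall ℂ l2N 1)
  obtain ⟨t, htfin, htcover⟩ :=
    (Metric.totallyBounded_iff.mp hK.totallyBounded) ε₁ hε₁
  -- choose k truncating all net points well
  have hev : ∀ᶠ k in Filter.atTop, ∀ y ∈ t, ‖y - QCLM (Finset.range k) y‖ < ε₁ := by
    rw [Filter.eventually_all_finite htfin]
    intro y _
    have := (tendsto_QCLM y)
    have h2 : Filter.Tendsto (fun k => ‖y - QCLM (Finset.range k) y‖)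
        Filter.atTop (nhds 0) := by
      have := this.const_sub y
      rw [sub_self] at this
      exact this.norm.congr' (by filter_upwards with k using rfl) |>.mono_right
        (by simp [norm_zero])
    exact (h2.eventually (Filter.Tendsto.eventually_lt_const hε₁ Filter.tendsto_id)).mono
      (fun k hk => by simpa using hk)
  obtain ⟨k, hk⟩ := hev.exists
  -- Claim 1 : truncating rows of `a` changes it by at most `2 ε₁` in norm
  have claim1 : ∀ x : l2N, ‖a x - QCLM (Finset.range k) (a x)‖ ≤ 2 * ε₁ * ‖x‖ := by
    intro x
    rcases eq_or_ne x 0 with rfl | hx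
    · simp
    · have hxn : (0:ℝ) < ‖x‖ := norm_pos_iff.mpr hx
      set u : l2N := ((‖x‖⁻¹ : ℝ) : ℂ) • x with hu
      have hun : ‖u‖ = 1 := by
        rw [hu, norm_smul]
        simp [norm_inv, abs_of_pos hxn, inv_mul_cancel₀ hxn.ne']
      have hmem : a u ∈ closure (⇑a '' Metric.closedBall 0 1) :=
        subset_closure ⟨u, by simp [hun], rfl⟩
      obtain ⟨y, hyt, hy⟩ := Set.mem_iUnion₂.mp (htcover hmem)
      have hdist : ‖a u - y‖ < ε₁ := by
        rw [← dist_eq_norm]; exact Metric.mem_ball.mp hy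
      have key : ‖a u - QCLM (Finset.range k) (a u)‖ < 2 * ε₁ := by
        have h1 : a u - QCLM (Finset.range k) (a u)
            = ((a u - y) - QCLM (Finset.range k) (a u - y))
              + (y - QCLM (Finset.range k) y) := by
          rw [map_sub]; abel
        calc ‖a u - QCLM (Finset.range k) (a u)‖
            ≤ ‖(a u - y) - QCLM (Finset.range k) (a u - y)‖
              + ‖y - QCLM (Finset.range k) y‖ := by rw [h1]; exact norm_add_le _ _
          _ ≤ ‖a u - y‖ + ‖y - QCLM (Finset.range k) y‖ := by
              gcongr; exact norm_sub_QCLM_le _ _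
          _ < ε₁ + ε₁ := add_lt_add hdist (hk y hyt)
          _ = 2 * ε₁ := by ring
      have hkey2 : a x - QCLM (Finset.range k) (a x)
          = ((‖x‖ : ℝ) : ℂ) • (a u - QCLM (Finset.range k) (a u)) := by
        rw [hu, map_smul, map_smul, smul_sub, smul_smul, smul_smul,
          ← Complex.ofReal_mul, mul_inv_cancel₀ hxn.ne', Complex.ofReal_one,
          one_smul, one_smul]
      calc ‖a x - QCLM (Finset.range k) (a x)‖
          = ‖x‖ * ‖a u - QCLM (Finset.range k) (a u)‖ := by
            rw [hkey2, norm_smul]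
            simp [Complex.norm_real, abs_of_nonneg (norm_nonneg x)]
        _ ≤ ‖x‖ * (2 * ε₁) := by gcongr
        _ = 2 * ε₁ * ‖x‖ := by ring
  -- the Riesz vectors of the first k rows
  set v : ℕ → l2N := fun n => (ContinuousLinearMap.adjoint a) (lp.single 2 n 1) with hv
  have hvprop : ∀ (n : ℕ) (x : l2N), (a x) n = ⟪v n, x⟫ := by
    intro n x
    rw [hv]
    rw [ContinuousLinearMap.adjoint_inner_left]
    exact (inner_single_one n (a x)).symm
  -- choose j truncating the Riesz vectors well
  have hev2 : ∀ᶠ j in Filter.atTop, ∀ n ∈ Finset.range k,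
      ‖v n - QCLM (Finset.range j) (v n)‖ < ε₁ / (k+1) := by
    have hkpos : (0:ℝ) < ε₁ / (k+1) := by positivity
    rw [Filter.eventually_all_finset]
    intro n _
    have h2 : Filter.Tendsto (fun j => ‖v n - QCLM (Finset.range j) (v n)‖)
        Filter.atTop (nhds 0) := by
      have := (tendsto_QCLM (v n)).const_sub (v n)
      rw [sub_self] at this
      exact this.norm.congr' (by filter_upwards with j using rfl) |>.mono_right
        (by simp [norm_zero])
    exact (h2.eventually (Filter.Tendsto.eventually_lt_const hkpos Filter.tendsto_id)).mono
      (fun j hj => by simpa using hj)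
  obtain ⟨j, hj⟩ := hev2.exists
  -- Claim 2
  have claim2 : ∀ x : l2N,
      ‖QCLM (Finset.range k) (a x) - QCLM (Finset.range k) (a (QCLM (Finset.range j) x))‖
        ≤ ε₁ * ‖x‖ := by
    intro x
    have hdiff : QCLM (Finset.range k) (a x) - QCLM (Finset.range k) (a (QCLM (Finset.range j) x))
        = QCLM (Finset.range k) (a (x - QCLM (Finset.range j) x)) := by
      rw [map_sub, map_sub]
    rw [hdiff]
    set w : l2N := x - QCLM (Finset.range j) x with hw
    calc ‖QCLM (Finset.range k) (a w)‖ ≤ ∑ n ∈ Finset.range k, ‖(a w) n‖ :=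
          norm_QCLM_apply_le _ _
      _ ≤ ∑ n ∈ Finset.range k, (ε₁/(k+1)) * ‖x‖ := by
          refine Finset.sum_le_sum fun n hn => ?_
          have : (a w) n = ⟪v n - QCLM (Finset.range j) (v n), x⟫ := by
            rw [hvprop n w, hw, inner_sub_right, ← inner_QCLM, ← inner_sub_left]
          rw [this]
          calc ‖⟪v n - QCLM (Finset.range j) (v n), x⟫‖
              ≤ ‖v n - QCLM (Finset.range j) (v n)‖ * ‖x‖ := norm_inner_le_norm _ _
            _ ≤ (ε₁/(k+1)) * ‖x‖ := by gcongr; exact (hj n hn).le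
      _ = k * ((ε₁/(k+1)) * ‖x‖) := by
          rw [Finset.sum_const, Finset.card_range, nsmul_eq_mul]
      _ ≤ ε₁ * ‖x‖ := by
          have h1 : (k:ℝ)/(k+1) ≤ 1 := by
            rw [div_le_one (by positivity)]; linarith
          calc (k:ℝ) * ((ε₁/(k+1)) * ‖x‖) = ((k:ℝ)/(k+1)) * (ε₁ * ‖x‖) := by
                field_simp
            _ ≤ 1 * (ε₁ * ‖x‖) := mul_le_mul_of_nonneg_right h1 (by positivity)
            _ = ε₁ * ‖x‖ := one_mul _
  -- assemble
  refine ⟨(QCLM (Finset.range k)).comp (a.comp (QCLM (Finset.range j))), RCFinite_truncated a k j, ?_⟩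
  rw [dist_eq_norm]
  have hnorm : ‖a - (QCLM (Finset.range k)).comp (a.comp (QCLM (Finset.range j)))‖ ≤ 3 * ε₁ := by
    refine ContinuousLinearMap.opNorm_le_bound _ (by positivity) fun x => ?_
    have hsplit : (a - (QCLM (Finset.range k)).comp (a.comp (QCLM (Finset.range j)))) x
        = (a x - QCLM (Finset.range k) (a x))
          + (QCLM (Finset.range k) (a x) - QCLM (Finset.range k) (a (QCLM (Finset.range j) x))) := by
      simp [ContinuousLinearMap.sub_apply, ContinuousLinearMap.comp_apply]
    rw [hsplit]
    calc ‖_ + _‖ ≤ ‖a x - QCLM (Finset.range k) (a x)‖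
          + ‖QCLM (Finset.range k) (a x) - QCLM (Finset.range k) (a (QCLM (Finset.range j) x))‖ :=
          norm_add_le _ _
      _ ≤ 2 * ε₁ * ‖x‖ + ε₁ * ‖x‖ := add_le_add (claim1 x) (claim2 x)
      _ = 3 * ε₁ * ‖x‖ := by ring
  calc ‖a - (QCLM (Finset.range k)).comp (a.comp (QCLM (Finset.range j)))‖
      ≤ 3 * ε₁ := hnorm
    _ < ε := by rw [hε₁def]; linarith

/-! ### An operator not in `C_RC` -/

abbrev SigT : Type := Σ m : ℕ, Fin (m+1)

instance : Infinite SigT :=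
  Infinite.of_injective (fun m : ℕ => (⟨m, 0⟩ : SigT)) (fun a b h => by
    simpa using congrArg Sigma.fst h)

instance : Denumerable SigT := Denumerable.ofEncodableOfInfinite SigT

def eSig : ℕ ≃ SigT := (Denumerable.eqv SigT).symm

def blk (n : ℕ) : ℕ := (eSig n).1

/-- auxiliary: `r ^ (2 : ℝ≥0∞).toReal = r ^ (2:ℕ)` for `r ≥ 0`-ish -/
lemma rpow_two_toReal (r : ℝ) (hr : 0 ≤ r) : r ^ (2:ℝ≥0∞).toReal = r ^ (2:ℕ) := by
  rw [two_toReal, show (2:ℝ) = ((2:ℕ):ℝ) by norm_num, Real.rpow_natCast]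

def Afun (x : l2N) : ℕ → ℂ :=
  fun n => (((Real.sqrt (blk n + 1))⁻¹ : ℝ) : ℂ) * x (blk n)

lemma Afun_norm_sq (x : l2N) (n : ℕ) :
    ‖Afun x n‖ ^ (2:ℕ) = ‖x (blk n)‖^(2:ℕ) / (blk n + 1) := by
  have hpos : (0:ℝ) < (blk n : ℝ) + 1 := by positivity
  rw [Afun, norm_mul, mul_pow, Complex.norm_real, Real.norm_eq_abs,
    abs_of_nonneg (by positivity : (0:ℝ) ≤ (Real.sqrt (blk n + 1))⁻¹)]
  rw [inv_pow, sq, Real.mul_self_sqrt hpos.le]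
  ring

lemma g_summable (x : l2N) :
    Summable (fun p : SigT => ‖x p.1‖^(2:ℕ) / (p.1 + 1) : SigT → ℝ) := by
  rw [summable_sigma_of_nonneg (fun p => by positivity)]
  refine ⟨fun m => Summable.of_finite, ?_⟩
  have hx : Summable fun m : ℕ => ‖x m‖^(2:ℕ) := by
    have h := (lp.memℓp x).summable two_toReal_pos
    refine h.congr fun m => ?_
    exact rpow_two_toReal _ (norm_nonneg _)
  refine hx.congr fun m => ?_
  rw [tsum_fintype]
  simp only [Finset.sum_const, Finset.card_univ, Fintype.card_fin, nsmul_eq_mul]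
  have : ((m:ℝ) + 1) ≠ 0 := by positivity
  field_simp
  simp

lemma Afun_memℓp (x : l2N) : Memℓp (Afun x) 2 := by
  apply memℓp_gen
  have h : Summable ((fun p : SigT => ‖x p.1‖^(2:ℕ) / (p.1 + 1)) ∘ eSig) :=
    (Equiv.summable_iff eSig).mpr (g_summable x)
  refine h.congr fun n => ?_
  rw [Function.comp_apply]
  rw [rpow_two_toReal _ (norm_nonneg _), Afun_norm_sq]
  rfl

def Aelem (x : l2N) : l2N := ⟨Afun x, Afun_memℓp x⟩

@[simp] lemma Aelem_apply (x : l2N) (n : ℕ) : (Aelem x) n = Afun x n := rfl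

lemma Aelem_norm (x : l2N) : ‖Aelem x‖ = ‖x‖ := by
  refine Real.rpow_left_injOn two_toReal_pos.ne' (norm_nonneg _) (norm_nonneg _) ?_
  show ‖Aelem x‖ ^ (2:ℝ≥0∞).toReal = ‖x‖ ^ (2:ℝ≥0∞).toReal
  rw [lp.norm_rpow_eq_tsum two_toReal_pos, lp.norm_rpow_eq_tsum two_toReal_pos]
  have h1 : ∀ n : ℕ, ‖(Aelem x) n‖ ^ (2:ℝ≥0∞).toReal
      = (fun p : SigT => ‖x p.1‖^(2:ℕ) / (p.1 + 1)) (eSig n) := by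
    intro n
    rw [rpow_two_toReal _ (norm_nonneg _), Aelem_apply, Afun_norm_sq]
    rfl
  rw [tsum_congr h1, Equiv.tsum_eq eSig (fun p : SigT => ‖x p.1‖^(2:ℕ) / (p.1 + 1))]
  rw [Summable.tsum_sigma' (fun m => Summable.of_finite) (g_summable x)]
  refine tsum_congr fun m => ?_
  rw [tsum_fintype]
  simp only [Finset.sum_const, Finset.card_univ, Fintype.card_fin, nsmul_eq_mul]
  rw [rpow_two_toReal _ (norm_nonneg _)]
  have : ((m:ℝ) + 1) ≠ 0 := by positivity
  field_simp
  push_cast; ring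

def A : l2N →L[ℂ] l2N :=
  LinearMap.mkContinuous
    { toFun := Aelem
      map_add' := fun x y => by
        apply lp.ext; funext n
        simp only [lp.coeFn_add, Pi.add_apply, Aelem_apply, Afun]
        ring
      map_smul' := fun c x => by
        apply lp.ext; funext n
        simp only [lp.coeFn_smul, Pi.smul_apply, Aelem_apply, Afun,
          RingHom.id_apply, smul_eq_mul]
        ring }
    1 (fun x => by show ‖Aelem x‖ ≤ 1 * ‖x‖; rw [Aelem_norm, one_mul])

lemma entry_A (n m : ℕ) :
    entry A n m = if blk n = m then (((Real.sqrt (m+1))⁻¹ : ℝ) : ℂ) else 0 := by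
  show Afun (lp.single 2 m 1) n = _
  rw [Afun]
  by_cases h : blk n = m
  · rw [if_pos h, h, lp.single_apply_self, mul_one]
  · rw [if_neg h, lp.single_apply_ne 2 m 1 h, mul_zero]

lemma blk_eSig_symm (m : ℕ) (i : Fin (m+1)) : blk (eSig.symm ⟨m, i⟩) = m := by
  rw [blk, Equiv.apply_symm_apply]

lemma A_not_mem_CRC : A ∉ C_RC := by
  intro hmem
  rw [C_RC, Metric.mem_closure_iff] at hmem
  obtain ⟨b, hb, hdist⟩ := hmem (1/2) (by norm_num)
  obtain ⟨N, hN⟩ := hb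
  set m : ℕ := 2*N with hm
  -- the support of column m of b
  obtain ⟨hSfin, hScard⟩ := Set.encard_le_coe_iff_finite_ncard_le.mp (hN m).1
  set S : Finset ℕ := hSfin.toFinset with hS
  have hScard' : S.card ≤ N := by
    have h := (hN m).1
    rw [hSfin.encard_eq_coe_toFinset_card] at h
    rw [hS]
    exact_mod_cast h
  -- the block of column m of A
  set C : Finset ℕ := (Finset.univ : Finset (Fin (m+1))).image (fun i => eSig.symm ⟨m, i⟩)
    with hCdef
  have hCcard : C.card = m+1 := by
    rw [hCdef, Finset.card_image_of_injective _ (fun i j hij => by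
      have := congrArg eSig hij
      rw [Equiv.apply_symm_apply, Equiv.apply_symm_apply] at this
      exact eq_of_heq (Sigma.mk.inj_iff.mp this).2), Finset.card_univ, Fintype.card_fin]
  set t : Finset ℕ := C \ S with ht
  have htcard : N + 1 ≤ t.card := by
    have h1 : C.card - S.card ≤ t.card := Finset.le_card_sdiff S C
    omega
  -- pointwise values on t
  set d : l2N := (A - b) (lp.single 2 m 1) with hd
  have hdval : ∀ n ∈ t, ‖d n‖^(2:ℕ) = ((m:ℝ)+1)⁻¹ := by
    intro n hn
    rw [ht, Finset.mem_sdiff] at hn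
    obtain ⟨hnC, hnS⟩ := hn
    have hblk : blk n = m := by
      rw [hCdef] at hnC
      obtain ⟨i, _, rfl⟩ := Finset.mem_image.mp hnC
      exact blk_eSig_symm m i
    have hbzero : entry b n m = 0 := by
      by_contra hcon
      exact hnS (by rw [hS, Set.Finite.mem_toFinset]; exact hcon)
    have : d n = entry A n m - entry b n m := by
      rw [hd, ContinuousLinearMap.sub_apply, lp.coeFn_sub, Pi.sub_apply]
      rfl
    rw [this, hbzero, sub_zero, entry_A, if_pos hblk]
    have hpos : (0:ℝ) < (m:ℝ) + 1 := by positivity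
    rw [Complex.norm_real, Real.norm_eq_abs,
      abs_of_nonneg (by positivity : (0:ℝ) ≤ (Real.sqrt (m+1))⁻¹), inv_pow, sq,
      Real.mul_self_sqrt hpos.le]
  -- lower bound for ‖d‖²
  have hsum : ∑ n ∈ t, ‖d n‖ ^ (2:ℝ≥0∞).toReal ≤ ‖d‖ ^ (2:ℝ≥0∞).toReal :=
    lp.sum_rpow_le_norm_rpow two_toReal_pos d t
  have hsumval : ((N:ℝ)+1) * ((m:ℝ)+1)⁻¹ ≤ ∑ n ∈ t, ‖d n‖ ^ (2:ℝ≥0∞).toReal := by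
    have : ∑ n ∈ t, ‖d n‖ ^ (2:ℝ≥0∞).toReal = ∑ n ∈ t, ((m:ℝ)+1)⁻¹ := by
      refine Finset.sum_congr rfl fun n hn => ?_
      rw [rpow_two_toReal _ (norm_nonneg _), hdval n hn]
    rw [this, Finset.sum_const, nsmul_eq_mul]
    have h2 : ((N:ℝ)+1) ≤ (t.card : ℝ) := by exact_mod_cast htcard
    have h3 : (0:ℝ) ≤ ((m:ℝ)+1)⁻¹ := by positivity
    exact mul_le_mul_of_nonneg_right h2 h3
  have hhalf : (1:ℝ)/2 < ((N:ℝ)+1) * ((m:ℝ)+1)⁻¹ := by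
    have hmn : (m:ℝ) = 2*(N:ℝ) := by rw [hm]; push_cast; ring
    rw [hmn]
    have hpos : (0:ℝ) < 2*(N:ℝ)+1 := by positivity
    rw [← div_eq_mul_inv, lt_div_iff₀ hpos]
    linarith
  -- upper bound for ‖d‖
  have hdnorm : ‖d‖ < 1/2 := by
    have h1 : ‖d‖ ≤ ‖A - b‖ * ‖(lp.single 2 m 1 : l2N)‖ :=
      ContinuousLinearMap.le_opNorm _ _
    have h2 : ‖(lp.single 2 m 1 : l2N)‖ = 1 := by
      rw [lp.norm_single (E := fun _ : ℕ => ℂ) (by norm_num : (0:ℝ≥0∞) < 2) m (1:ℂ)]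
      simp
    rw [h2, mul_one] at h1
    rw [dist_eq_norm] at hdist
    linarith
  have hd2 : ‖d‖ ^ (2:ℝ≥0∞).toReal < 1/2 := by
    rw [rpow_two_toReal _ (norm_nonneg _)]
    nlinarith [norm_nonneg d]
  linarith

/-- `K(ℓ²(ℕ)) ⊊ C_RC ⊊ B(ℓ²(ℕ))`. -/
theorem compact_ssubset_CRC_ssubset_bounded :
    {a : l2N →L[ℂ] l2N | IsCompactOperator a} ⊂ C_RC ∧ C_RC ⊂ Set.univ := by
  constructor
  · rw [Set.ssubset_def]
    refine ⟨fun a ha => compact_mem_CRC ha, fun hsub => ?_⟩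
    have hid : (ContinuousLinearMap.id ℂ l2N) ∈ C_RC := subset_closure RCFinite_id
    exact not_isCompactOperator_id (hsub hid)
  · rw [Set.ssubset_def]
    refine ⟨Set.subset_univ _, fun hsub => ?_⟩
    exact A_not_mem_CRC (hsub (Set.mem_univ A))
end
end

section
/- Let f : [0,∞] → [0,∞] be an increasing function such that f(qx)·x ≤ f(x)·(qx) for every x ∈ (0,∞) and every rational q ≥ 1 (i.e., the slope-to-origin does not increase when the argument is multiplied by a rational q ≥ 1). Then f is continuous on (0,∞). -/
open ENNReal

/-- If `f : [0,∞] → [0,∞]` is increasing and the slope-to-origin does not increase when the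
argument is multiplied by a rational `q ≥ 1`, then `f` is continuous on `(0,∞)`. -/
theorem continuousOn_of_slope_rat (f : ℝ≥0∞ → ℝ≥0∞) (hmono : Monotone f)
    (h : ∀ x : ℝ≥0∞, 0 < x → x < ⊤ → ∀ q : ℚ, 1 ≤ q →
      f (ENNReal.ofReal (q : ℝ) * x) * x ≤ f x * (ENNReal.ofReal (q : ℝ) * x)) :
    ContinuousOn f (Set.Ioo 0 ⊤) := by
  have key : ∀ x : ℝ≥0∞, 0 < x → x < ⊤ → ∀ q : ℚ, 1 ≤ q →
      f (ENNReal.ofReal (q : ℝ) * x) ≤ ENNReal.ofReal (q : ℝ) * f x := by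
    intro x hx hxt q hq
    have H := h x hx hxt q hq
    rw [show f x * (ENNReal.ofReal (q : ℝ) * x) = (ENNReal.ofReal (q : ℝ) * f x) * x by ring]
      at H
    exact (ENNReal.mul_le_mul_iff_left hx.ne' hxt.ne).mp H
  intro x₀ hx₀
  obtain ⟨hx0, hxt⟩ := hx₀
  apply ContinuousAt.continuousWithinAt
  by_cases htop : f x₀ = ⊤
  · -- f is ⊤ on a neighborhood of x₀
    have hev : ∀ᶠ y in nhds x₀, f y = ⊤ := by
      have hmem : Set.Ioi (x₀ / 2) ∈ nhds x₀ :=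
        Ioi_mem_nhds (ENNReal.half_lt_self hx0.ne' hxt.ne)
      filter_upwards [hmem] with y hy
      rcases le_or_gt x₀ y with hle | hlt
      · exact top_le_iff.mp (htop ▸ hmono hle)
      · have hy0 : 0 < y := lt_of_le_of_lt zero_le hy
        have hyt : y < ⊤ := lt_trans hlt hxt
        have h2 : ENNReal.ofReal ((2 : ℚ) : ℝ) = 2 := by norm_num
        have hk := key y hy0 hyt 2 (by norm_num)
        rw [h2] at hk
        have h2y : x₀ < 2 * y := by
          calc x₀ = 2 * (x₀ / 2) := (ENNReal.mul_div_cancel two_ne_zero ofNat_ne_top).symm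
          _ < 2 * y := (ENNReal.mul_lt_mul_iff_right two_ne_zero ofNat_ne_top).mpr hy
        have : (⊤ : ℝ≥0∞) ≤ 2 * f y := by
          calc (⊤ : ℝ≥0∞) = f x₀ := htop.symm
          _ ≤ f (2 * y) := hmono h2y.le
          _ ≤ 2 * f y := hk
        rcases eq_or_ne (f y) ⊤ with h' | h'
        · exact h'
        · exact absurd (top_le_iff.mp this) (ENNReal.mul_ne_top ofNat_ne_top h')
    have : Filter.Tendsto f (nhds x₀) (nhds ⊤) :=
      Filter.Tendsto.congr' (hev.mono fun y hy => hy.symm) tendsto_const_nhds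
    rw [ContinuousAt, htop]; exact this
  · have hft : f x₀ < ⊤ := lt_top_iff_ne_top.mpr htop
    rw [ContinuousAt]
    refine tendsto_order.2 ⟨?_, ?_⟩
    · -- lower: ∀ a < f x₀, eventually a < f y
      intro a ha
      -- choose rational q > 1 with ofReal q * a < f x₀
      obtain ⟨q, hq1, hqa⟩ : ∃ q : ℚ, 1 < ENNReal.ofReal (q : ℝ) ∧
          ENNReal.ofReal (q : ℝ) * a < f x₀ := by
        rcases eq_or_ne a 0 with rfl | ha0
        · exact ⟨2, by norm_num, by simpa using ha⟩
        · have hat : a ≠ ⊤ := ha.ne_top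
          have h1 : (1 : ℝ≥0∞) < f x₀ / a :=
            (ENNReal.lt_div_iff_mul_lt (Or.inl ha0) (Or.inl hat)).mpr (by simpa using ha)
          obtain ⟨q, hq0, hq1, hq2⟩ := ENNReal.lt_iff_exists_rat_btwn.mp h1
          refine ⟨q, ?_, ?_⟩
          · simpa [ENNReal.ofReal] using hq1
          · have := ENNReal.mul_lt_of_lt_div hq2
            simpa [ENNReal.ofReal] using this
      have hq1' : (1 : ℚ) ≤ q := by
        have : (1 : ℝ) < (q : ℝ) := ENNReal.one_lt_ofReal.mp hq1
        exact_mod_cast this.le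
      set Q := ENNReal.ofReal (q : ℝ) with hQ
      have hQ0 : Q ≠ 0 := (lt_trans zero_lt_one hq1).ne'
      have hQt : Q ≠ ⊤ := ofReal_ne_top
      have hmem : Set.Ioi (x₀ / Q) ∈ nhds x₀ := by
        apply Ioi_mem_nhds
        rw [ENNReal.div_lt_iff (Or.inl hQ0) (Or.inl hQt)]
        calc x₀ = x₀ * 1 := (mul_one _).symm
        _ < x₀ * Q := (ENNReal.mul_lt_mul_iff_right hx0.ne' hxt.ne).mpr hq1
      filter_upwards [hmem] with y hy
      rcases le_or_gt x₀ y with hle | hlt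
      · exact lt_of_lt_of_le ha (hmono hle)
      · have hy0 : 0 < y := lt_of_le_of_lt zero_le hy
        have hyt : y < ⊤ := lt_trans hlt hxt
        have hqy : x₀ < Q * y := by
          calc x₀ = Q * (x₀ / Q) := (ENNReal.mul_div_cancel hQ0 hQt).symm
          _ < Q * y := (ENNReal.mul_lt_mul_iff_right hQ0 hQt).mpr hy
        have : Q * a < Q * f y :=
          lt_of_lt_of_le (lt_of_lt_of_le hqa (hmono hqy.le)) (key y hy0 hyt q hq1')
        exact (ENNReal.mul_lt_mul_iff_right hQ0 hQt).mp this
    · -- upper: ∀ a > f x₀, eventually f y < a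
      intro a ha
      obtain ⟨q, hq1, hqa⟩ : ∃ q : ℚ, 1 < ENNReal.ofReal (q : ℝ) ∧
          ENNReal.ofReal (q : ℝ) * f x₀ < a := by
        rcases eq_or_ne (f x₀) 0 with hf0 | hf0
        · exact ⟨2, by norm_num, by simpa [hf0] using ha⟩
        · have h1 : (1 : ℝ≥0∞) < a / f x₀ :=
            (ENNReal.lt_div_iff_mul_lt (Or.inl hf0) (Or.inl hft.ne)).mpr (by simpa using ha)
          obtain ⟨q, hq0, hq1, hq2⟩ := ENNReal.lt_iff_exists_rat_btwn.mp h1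
          refine ⟨q, ?_, ?_⟩
          · simpa [ENNReal.ofReal] using hq1
          · have := ENNReal.mul_lt_of_lt_div hq2
            simpa [ENNReal.ofReal] using this
      have hq1' : (1 : ℚ) ≤ q := by
        have : (1 : ℝ) < (q : ℝ) := ENNReal.one_lt_ofReal.mp hq1
        exact_mod_cast this.le
      set Q := ENNReal.ofReal (q : ℝ) with hQ
      have hQ0 : Q ≠ 0 := (lt_trans zero_lt_one hq1).ne'
      have hQt : Q ≠ ⊤ := ofReal_ne_top
      have hmem : Set.Iio (Q * x₀) ∈ nhds x₀ := by
        apply Iio_mem_nhds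
        calc x₀ = 1 * x₀ := (one_mul _).symm
        _ < Q * x₀ := (ENNReal.mul_lt_mul_iff_left hx0.ne' hxt.ne).mpr hq1
      filter_upwards [hmem] with y hy
      calc f y ≤ f (Q * x₀) := hmono hy.le
      _ ≤ Q * f x₀ := key x₀ hx0 hxt q hq1'
      _ < a := hqa
end

section
/- Every ISOD function is the pointwise supremum of a sequence of ICOD functions: for every ISOD function f : [0,∞] → [0,∞] there exists a sequence (g_n)_{n∈ℕ} of ICOD functions with f(x) = sup_n g_n(x) for all x ∈ [0,∞]. -/
open ENNReal

/-- `f : [0,∞] → [0,∞]` is ICOD: increasing, concave down, `f 0 = 0`, `f ∞ = sup_{t<∞} f t`. -/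
def ICOD (f : ℝ≥0∞ → ℝ≥0∞) : Prop :=
  Monotone f ∧
  (∀ a b x y : ℝ≥0∞, a + b = 1 → a * f x + b * f y ≤ f (a * x + b * y)) ∧
  f 0 = 0 ∧
  f ⊤ = ⨆ t ∈ Set.Iio (⊤ : ℝ≥0∞), f t

/-- `f : [0,∞] → [0,∞]` is ISOD: increasing, `f 0 = 0`, `f ∞ = sup_{t<∞} f t`, and the
slope to the origin `f x / x` is decreasing: `x * f y ≤ y * f x` for `0 < x ≤ y < ∞`. -/
def ISOD (f : ℝ≥0∞ → ℝ≥0∞) : Prop :=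
  Monotone f ∧ f 0 = 0 ∧ (f ⊤ = ⨆ t ∈ Set.Iio (⊤ : ℝ≥0∞), f t) ∧
  ∀ x y : ℝ≥0∞, 0 < x → x ≤ y → y < ⊤ → x * f y ≤ y * f x

/-- The zero function is ICOD. -/
lemma icod_zero : ICOD (fun _ => (0 : ℝ≥0∞)) := by
  refine ⟨monotone_const, ?_, rfl, ?_⟩
  · intro a b x y _; simp
  · simp

/-- `x ↦ min (c * x) M` is ICOD. -/
lemma icod_min (c M : ℝ≥0∞) : ICOD (fun x => min (c * x) M) := by
  refine ⟨?_, ?_, ?_, ?_⟩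
  · intro x y hxy
    exact min_le_min (mul_le_mul_right hxy c) le_rfl
  · intro a b x y hab
    refine le_min ?_ ?_
    · calc a * min (c * x) M + b * min (c * y) M
          ≤ a * (c * x) + b * (c * y) := by
            gcongr <;> exact min_le_left _ _
        _ = c * (a * x + b * y) := by ring
    · calc a * min (c * x) M + b * min (c * y) M
          ≤ a * M + b * M := by gcongr <;> exact min_le_right _ _
        _ = (a + b) * M := by ring
        _ = M := by rw [hab, one_mul]
  · simp
  · show min (c * ⊤) M = ⨆ t ∈ Set.Iio (⊤ : ℝ≥0∞), min (c * t) M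
    have h1 : c * (⊤ : ℝ≥0∞) = ⨆ n : ℕ, c * n := by
      rw [← ENNReal.mul_iSup, ENNReal.iSup_natCast]
    apply le_antisymm
    · rw [h1]
      have h2 : (⨆ n : ℕ, c * n) ⊓ M = ⨆ n : ℕ, (c * n) ⊓ M := iSup_inf_eq _ _
      calc min (⨆ n : ℕ, c * n) M = ⨆ n : ℕ, min (c * n) M := h2
        _ ≤ ⨆ t ∈ Set.Iio (⊤ : ℝ≥0∞), min (c * t) M := by
            exact iSup_le fun n => le_iSup₂ (f := fun (u : ℝ≥0∞) (_ : u ∈ Set.Iio (⊤:ℝ≥0∞)) => min (c * u) M)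
              (n : ℝ≥0∞) (ENNReal.natCast_lt_top n)
    · exact iSup₂_le fun t ht => min_le_min (mul_le_mul_right le_top c) le_rfl

/-- Every ISOD function is the pointwise supremum of a sequence of ICOD functions. -/
theorem isod_is_sup_of_icod (f : ℝ≥0∞ → ℝ≥0∞) (hf : ISOD f) :
    ∃ g : ℕ → ℝ≥0∞ → ℝ≥0∞, (∀ n, ICOD (g n)) ∧ ∀ x, f x = ⨆ n, g n x := by
  classical
  obtain ⟨hmono, hf0, hftop, hslope⟩ := hf
  -- the enumeration of candidate points
  obtain ⟨e, he⟩ : ∃ e : ℕ → ℚ, Function.Surjective e := exists_surjective_nat ℚ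
  set t : ℕ → ℝ≥0∞ := fun n => ENNReal.ofReal ((e n : ℚ) : ℝ) with ht
  have httop : ∀ n, t n < ⊤ := fun n => ENNReal.ofReal_lt_top
  have hsurj : ∀ q : ℚ, ∃ n, t n = ENNReal.ofReal (q : ℝ) := by
    intro q
    obtain ⟨n, hn⟩ := he q
    refine ⟨n, ?_⟩
    show ENNReal.ofReal ((e n : ℚ) : ℝ) = _
    rw [hn]
  set g : ℕ → ℝ≥0∞ → ℝ≥0∞ := fun n =>
    if t n = 0 then (fun _ => 0) else (fun x => min (f (t n) / t n * x) (f (t n))) with hg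
  refine ⟨g, ?_, ?_⟩
  · intro n
    by_cases h : t n = 0
    · simp only [hg, h, if_pos]; exact icod_zero
    · simp only [hg, h, if_neg, if_false]; exact icod_min _ _
  · -- key fact: each g n ≤ f
    have hle : ∀ n x, g n x ≤ f x := by
      intro n x
      by_cases h : t n = 0
      · simp [hg, h]
      · simp only [hg, h, if_neg, if_false]
        rcases le_total x (t n) with hx | hx
        · rcases eq_or_ne x 0 with rfl | hx0
          · simp [hf0]
          · refine le_trans (min_le_left _ _) ?_
            have hsl := hslope x (t n) (zero_lt_iff.mpr hx0) hx (httop n)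
            have key : f (t n) * x / t n ≤ f x := by
              rw [ENNReal.div_le_iff_le_mul (Or.inl h) (Or.inl (httop n).ne)]
              calc f (t n) * x = x * f (t n) := mul_comm _ _
                _ ≤ t n * f x := hsl
                _ = f x * t n := mul_comm _ _
            calc f (t n) / t n * x = f (t n) * x / t n := by
                  rw [div_eq_mul_inv, div_eq_mul_inv, mul_right_comm]
              _ ≤ f x := key
        · exact le_trans (min_le_right _ _) (hmono hx)
    -- key fact: g n x = f (t n) when t n ≤ x and t n ≠ 0
    have heq : ∀ n x, t n ≠ 0 → t n ≤ x → g n x = f (t n) := by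
      intro n x h hx
      simp only [hg, h, if_neg, if_false]
      refine min_eq_right ?_
      calc f (t n) = f (t n) / t n * t n :=
            (ENNReal.div_mul_cancel h (httop n).ne).symm
        _ ≤ f (t n) / t n * x := mul_le_mul_right hx _
    intro x
    refine le_antisymm ?_ (iSup_le fun n => hle n x)
    -- f x ≤ ⨆ n, g n x
    rcases eq_or_ne x 0 with rfl | hx0
    · simp [hf0]
    rcases eq_or_ne x ⊤ with rfl | hxtop
    · rw [hftop]
      refine iSup₂_le fun s hs => ?_
      obtain ⟨q, hq0, hsq, _⟩ := ENNReal.lt_iff_exists_rat_btwn.mp hs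
      obtain ⟨n, hn⟩ := hsurj q
      have h1 : ENNReal.ofReal ((q:ℚ) : ℝ) = (((q:ℝ)).toNNReal : ℝ≥0∞) := rfl
      have hn0 : t n ≠ 0 := by
        rw [hn, h1]; exact (lt_of_le_of_lt zero_le hsq).ne'
      calc f s ≤ f (t n) := hmono (le_of_lt (by rw [hn, h1]; exact hsq))
        _ = g n ⊤ := (heq n ⊤ hn0 le_top).symm
        _ ≤ ⨆ m, g m ⊤ := le_iSup (fun m => g m ⊤) n
    · -- 0 < x < ⊤
      set S := ⨆ n, g n x with hS
      -- for each qualifying rational, ofReal q * f x ≤ x * S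
      have key : ∀ q : ℚ, ENNReal.ofReal (q : ℝ) ≠ 0 → ENNReal.ofReal (q : ℝ) ≤ x →
          ENNReal.ofReal (q : ℝ) * f x ≤ x * S := by
        intro q hq0 hqx
        obtain ⟨n, hn⟩ := hsurj q
        calc ENNReal.ofReal (q : ℝ) * f x
            ≤ x * f (ENNReal.ofReal (q : ℝ)) :=
              hslope _ x (zero_lt_iff.mpr hq0) hqx (lt_top_iff_ne_top.mpr hxtop)
          _ = x * f (t n) := by rw [hn]
          _ ≤ x * S := by
              refine mul_le_mul_right ?_ x
              rw [← heq n x (hn ▸ hq0) (hn ▸ hqx)]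
              exact le_iSup (fun m => g m x) n
      -- sup of qualifying rationals is at least x
      have hsupx : x ≤ ⨆ (q : ℚ) (_ : ENNReal.ofReal (q : ℝ) ≠ 0 ∧ ENNReal.ofReal (q : ℝ) ≤ x),
          ENNReal.ofReal (q : ℝ) := by
        refine le_of_forall_lt fun y hy => ?_
        obtain ⟨q, hq0, hyq, hqx⟩ := ENNReal.lt_iff_exists_rat_btwn.mp hy
        have h1 : ENNReal.ofReal (q : ℝ) = ((q : ℝ).toNNReal : ℝ≥0∞) := rfl
        refine lt_of_lt_of_le (h1 ▸ hyq) ?_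
        refine le_iSup₂ (f := fun (q:ℚ) _ => ENNReal.ofReal (q:ℝ)) q ?_
        constructor
        · rw [h1]; exact (lt_of_le_of_lt zero_le (h1 ▸ hyq)).ne'
        · rw [h1]; exact le_of_lt hqx
      have hxS : x * f x ≤ x * S := by
        calc x * f x
            ≤ (⨆ (q : ℚ) (_ : ENNReal.ofReal (q : ℝ) ≠ 0 ∧ ENNReal.ofReal (q : ℝ) ≤ x),
                ENNReal.ofReal (q : ℝ)) * f x := mul_le_mul_left hsupx _
          _ = ⨆ (q : ℚ) (_ : ENNReal.ofReal (q : ℝ) ≠ 0 ∧ ENNReal.ofReal (q : ℝ) ≤ x),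
                ENNReal.ofReal (q : ℝ) * f x := by
              rw [ENNReal.iSup_mul]; congr 1; funext q; rw [ENNReal.iSup_mul]
          _ ≤ x * S := iSup₂_le fun q hq => key q hq.1 hq.2
      exact (ENNReal.mul_le_mul_iff_right hx0 hxtop).mp hxS
end

section
/- Let f : (0,∞) → (0,∞) be an increasing function such that x ↦ f(x)/x is decreasing on (0,∞). Then f ≤ f_{**} ≤ 2f on (0,∞), where f_* is the concave conjugate of f and f_{**} = (f_*)_*. -/
noncomputable section

/-- The (half-line) concave conjugate `g_*(x) = inf_{λ > 0} (λ·x − g(λ))`,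
computed in the extended reals. -/
def concaveConj (g : ℝ → EReal) : ℝ → EReal :=
  fun x => ⨅ l : {l : ℝ // 0 < l}, (((l.1 * x : ℝ) : EReal) - g l.1)

/-- If `f : (0,∞) → (0,∞)` is increasing with `f(x)/x` decreasing, then
`f ≤ f_{**} ≤ 2f` on `(0,∞)`. -/
theorem le_biconjugate_le_two_mul (f : ℝ → ℝ)
    (hpos : ∀ x : ℝ, 0 < x → 0 < f x)
    (hmono : ∀ x y : ℝ, 0 < x → x ≤ y → f x ≤ f y)
    (hslope : ∀ x y : ℝ, 0 < x → x ≤ y → f y * x ≤ f x * y) :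
    ∀ x : ℝ, 0 < x →
      (f x : EReal) ≤ concaveConj (concaveConj (fun y => (f y : EReal))) x ∧
      concaveConj (concaveConj (fun y => (f y : EReal))) x ≤ ((2 * f x : ℝ) : EReal) := by
  intro x hx
  set F : ℝ → EReal := concaveConj (fun y => (f y : EReal)) with hF
  constructor
  · show (f x : EReal) ≤ ⨅ l : {l : ℝ // 0 < l}, (((l.1 * x : ℝ) : EReal) - F l.1)
    apply le_iInf
    rintro ⟨l, hl⟩
    have h1 : F l ≤ ((l * x - f x : ℝ) : EReal) := by
      rw [hF]
      show (⨅ y : {y : ℝ // 0 < y}, (((y.1 * l : ℝ) : EReal) - ((f y.1 : ℝ) : EReal))) ≤ _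
      refine iInf_le_of_le ⟨x, hx⟩ ?_
      rw [← EReal.coe_sub]
      exact EReal.coe_le_coe_iff.mpr (le_of_eq (by ring))
    calc ((f x : ℝ) : EReal) = ((l * x : ℝ) : EReal) - ((l * x - f x : ℝ) : EReal) := by
          rw [← EReal.coe_sub]; norm_num
      _ ≤ ((l * x : ℝ) : EReal) - F l := EReal.sub_le_sub le_rfl h1
  · have hfp := hpos x hx
    have hl : 0 < f x / x := div_pos hfp hx
    show (⨅ l : {l : ℝ // 0 < l}, (((l.1 * x : ℝ) : EReal) - F l.1)) ≤ _
    refine iInf_le_of_le ⟨f x / x, hl⟩ ?_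
    have hlx : (f x / x) * x = f x := div_mul_cancel₀ _ hx.ne'
    have h2 : ((-(f x) : ℝ) : EReal) ≤ F (f x / x) := by
      rw [hF]
      show _ ≤ ⨅ y : {y : ℝ // 0 < y}, (((y.1 * (f x / x) : ℝ) : EReal) - ((f y.1 : ℝ) : EReal))
      apply le_iInf
      rintro ⟨y, hy⟩
      have key : -(f x) ≤ y * (f x / x) - f y := by
        rcases le_total y x with h | h
        · have hm := hmono y x hy h
          have hpos' : 0 < y * (f x / x) := mul_pos hy hl
          linarith
        · have hs := hslope x y hx h
          have h3 : f y * x ≤ y * f x := by rw [mul_comm y]; exact hs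
          have h4 : f y ≤ y * f x / x := (le_div_iff₀ hx).mpr h3
          have heq : y * (f x / x) = y * f x / x := (mul_div_assoc y (f x) x).symm
          linarith
      calc ((-(f x) : ℝ) : EReal) ≤ ((y * (f x / x) - f y : ℝ) : EReal) :=
            EReal.coe_le_coe_iff.mpr key
        _ = ((y * (f x / x) : ℝ) : EReal) - ((f y : ℝ) : EReal) := EReal.coe_sub _ _
    calc (((f x / x) * x : ℝ) : EReal) - F (f x / x)
        ≤ (((f x / x) * x : ℝ) : EReal) - ((-(f x) : ℝ) : EReal) :=
          EReal.sub_le_sub le_rfl h2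
      _ = (((f x / x) * x + f x : ℝ) : EReal) := by rw [← EReal.coe_sub]; ring_nf
      _ ≤ ((2 * f x : ℝ) : EReal) := EReal.coe_le_coe_iff.mpr (le_of_eq (by rw [hlx]; ring))
end
end

section
/- Let f₀ : [0,1] → [0,1] satisfy: (1) f₀ is increasing; (2) f₀ is concave down; (3) x < f₀(x) < 1 for all 0 < x < 1; (4) lim_{x→0⁺} f₀(x) = 0; (5) for all integers n > m ≥ 0, lim_{x→0⁺} f₀^{(n)}(x)/f₀^{(m)}(x) = ∞. Then there exists a family (f_α) indexed by the countable ordinals α < ω₁, with f at index 0 equal to f₀, such that every f_α satisfies properties (1)–(5), and for all ordinals α < β < ω₁ and every n ∈ ℕ, lim_{x→0⁺} f_β(x)/f_α^{(n)}(x) = ∞. -/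
open Filter

/-- A function `[0,1] → [0,1]` satisfying properties (1)–(5) of
Proposition about transfinite chains of constraint functions: increasing on `[0,1]`,
concave down on `[0,1]`, `x < f x < 1` on `(0,1)`, `lim_{x→0⁺} f x = 0`, and
`lim_{x→0⁺} f^{(n)}(x)/f^{(m)}(x) = ∞` for all `n > m ≥ 0`. -/
def GoodFn (f : ℝ → ℝ) : Prop :=
  (∀ x ∈ Set.Icc (0:ℝ) 1, f x ∈ Set.Icc (0:ℝ) 1) ∧
  (∀ x ∈ Set.Icc (0:ℝ) 1, ∀ y ∈ Set.Icc (0:ℝ) 1, x ≤ y → f x ≤ f y) ∧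
  (∀ x ∈ Set.Icc (0:ℝ) 1, ∀ y ∈ Set.Icc (0:ℝ) 1, ∀ t ∈ Set.Icc (0:ℝ) 1,
    t * f x + (1 - t) * f y ≤ f (t * x + (1 - t) * y)) ∧
  (∀ x ∈ Set.Ioo (0:ℝ) 1, x < f x ∧ f x < 1) ∧
  Tendsto f (nhdsWithin 0 (Set.Ioi 0)) (nhds 0) ∧
  (∀ n m : ℕ, m < n →
    Tendsto (fun x => f^[n] x / f^[m] x) (nhdsWithin 0 (Set.Ioi 0)) atTop)

open Set in
private lemma goodAux_iter_mem {f : ℝ → ℝ} (h1 : ∀ x ∈ Ioo (0:ℝ) 1, x < f x ∧ f x < 1) :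
    ∀ n : ℕ, ∀ x ∈ Ioo (0:ℝ) 1, f^[n] x ∈ Ico x 1 := by
  intro n
  induction n with
  | zero =>
    intro x hx
    simp only [Function.iterate_zero_apply]
    exact ⟨le_rfl, hx.2⟩
  | succ n ih =>
    intro x hx
    have h := ih x hx
    have hmem : f^[n] x ∈ Ioo (0:ℝ) 1 := ⟨lt_of_lt_of_le hx.1 h.1, h.2⟩
    have h2 := h1 _ hmem
    rw [Function.iterate_succ_apply']
    exact ⟨le_of_lt (lt_of_le_of_lt h.1 h2.1), h2.2⟩

open Set in
private lemma goodAux_tendsto_pos {f : ℝ → ℝ}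
    (h1 : ∀ x ∈ Ioo (0:ℝ) 1, x < f x ∧ f x < 1)
    (h2 : Tendsto f (nhdsWithin 0 (Set.Ioi 0)) (nhds 0)) :
    Tendsto f (nhdsWithin 0 (Set.Ioi 0)) (nhdsWithin 0 (Set.Ioi 0)) := by
  rw [tendsto_nhdsWithin_iff]
  refine ⟨h2, ?_⟩
  filter_upwards [Ioo_mem_nhdsGT_of_mem
    (show (0:ℝ) ∈ Ico (0:ℝ) 1 by constructor <;> norm_num)] with x hx
  exact lt_trans hx.1 (h1 x hx).1

open Set in
private lemma goodAux_ratio {f : ℝ → ℝ}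
    (h1 : ∀ x ∈ Ioo (0:ℝ) 1, x < f x ∧ f x < 1)
    (h2 : Tendsto f (nhdsWithin 0 (Set.Ioi 0)) (nhds 0))
    (h3 : Tendsto (fun x => f x / x) (nhdsWithin 0 (Set.Ioi 0)) atTop) :
    ∀ n m : ℕ, m < n →
      Tendsto (fun x => f^[n] x / f^[m] x) (nhdsWithin 0 (Set.Ioi 0)) atTop := by
  have hpos := goodAux_tendsto_pos h1 h2
  have hstep : ∀ m : ℕ,
      Tendsto (fun x => f^[m+1] x / f^[m] x) (nhdsWithin 0 (Set.Ioi 0)) atTop := by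
    intro m
    have he : (fun x => f^[m+1] x / f^[m] x) = (fun y => f y / y) ∘ f^[m] := by
      funext x; simp [Function.iterate_succ_apply']
    rw [he]
    exact h3.comp (hpos.iterate m)
  intro n
  induction n with
  | zero => intro m hm; exact absurd hm (Nat.not_lt_zero m)
  | succ n ih =>
    intro m hm
    rcases Nat.lt_succ_iff_lt_or_eq.mp hm with hm' | rfl
    · have h := (hstep n).atTop_mul_atTop₀ (ih m hm')
      refine Tendsto.congr' ?_ h
      filter_upwards [Ioo_mem_nhdsGT_of_mem
        (show (0:ℝ) ∈ Ico (0:ℝ) 1 by constructor <;> norm_num)] with x hx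
      have hn := (goodAux_iter_mem h1 n x hx).1
      have hne : f^[n] x ≠ 0 := ne_of_gt (lt_of_lt_of_le hx.1 hn)
      have hne2 : f^[m] x ≠ 0 :=
        ne_of_gt (lt_of_lt_of_le hx.1 (goodAux_iter_mem h1 m x hx).1)
      field_simp
    · exact hstep m

open Set in
private lemma dominate (f₀ : ℝ → ℝ) (h₀ : GoodFn f₀) (g : ℕ → ℝ → ℝ)
    (hg : ∀ i, GoodFn (g i)) :
    ∃ H : ℝ → ℝ, GoodFn H ∧
      ∀ i n : ℕ, Tendsto (fun x => H x / (g i)^[n] x) (nhdsWithin 0 (Set.Ioi 0)) atTop := by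
  classical
  set l : Filter ℝ := nhdsWithin 0 (Set.Ioi 0) with hl
  set G : ℕ → ℝ → ℝ := fun a => (g (Nat.unpair a).1)^[(Nat.unpair a).2] with hG
  have hGmem : ∀ a, ∀ x ∈ Ioo (0:ℝ) 1, G a x ∈ Ico x 1 := fun a =>
    goodAux_iter_mem (hg _).2.2.2.1 _
  have hGtend : ∀ a, Tendsto (G a) l (nhds 0) := by
    intro a
    have := (goodAux_tendsto_pos (hg (Nat.unpair a).1).2.2.2.1
      (hg (Nat.unpair a).1).2.2.2.2.1).iterate (Nat.unpair a).2
    exact this.mono_right nhdsWithin_le_nhds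
  set c : ℕ → ℝ → ℝ := fun m y => ((Nat.unpair m).2 : ℝ) * G (Nat.unpair m).1 y with hc
  have hctend : ∀ m, Tendsto (c m) l (nhds 0) := by
    intro m
    simpa using (hGtend (Nat.unpair m).1).const_mul ((Nat.unpair m).2 : ℝ)
  have hu : ∀ m : ℕ, ∃ δ : ℝ, 0 < δ ∧ δ ≤ 1/2 ∧
      ∀ m' ≤ m, ∀ y ∈ Ioc (0:ℝ) δ, c m' y ≤ ((1:ℝ)/2)^(m+2) := by
    intro m
    have hev : ∀ᶠ y in l, ∀ m' ∈ Finset.range (m+1), c m' y ≤ ((1:ℝ)/2)^(m+2) := by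
      rw [eventually_all_finset]
      intro m' _
      exact (hctend m').eventually (eventually_le_nhds (by positivity))
    rcases (nhdsGT_basis (0:ℝ)).eventually_iff.mp hev with ⟨δ₀, hδ₀, hsub⟩
    refine ⟨min (δ₀/2) (1/2), by positivity, min_le_right _ _, ?_⟩
    intro m' hm' y hy
    have hy' : y ∈ Ioo (0:ℝ) δ₀ :=
      ⟨hy.1, lt_of_le_of_lt (hy.2.trans (min_le_left _ _)) (by linarith)⟩
    exact hsub hy' m' (Finset.mem_range.mpr (Nat.lt_succ_of_le hm'))
  choose u hu0 hu2 huc using hu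
  set A : ℝ → ℝ := fun y => y * (2 - y) with hA
  set S : Set (ℝ × ℝ) := {p | 0 ≤ p.2 ∧ (∀ y ∈ Icc (0:ℝ) 1, A y ≤ p.1 + p.2 * y) ∧
      (∀ m, ∀ y ∈ Ioc (0:ℝ) (u m), c m y ≤ p.1 + p.2 * y)} with hS
  have hcsmall : ∀ m, ∀ y ∈ Ioc (0:ℝ) (u m), c m y ≤ 1/4 := by
    intro m y hy
    have h1 := huc m m le_rfl y hy
    have h2 : ((1:ℝ)/2)^(m+2) ≤ ((1:ℝ)/2)^2 :=
      pow_le_pow_of_le_one (by norm_num) (by norm_num) (by omega)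
    norm_num at h2
    linarith
  have hone : ((1:ℝ),(0:ℝ)) ∈ S := by
    refine ⟨le_rfl, ?_, ?_⟩
    · intro y hy; simp only [hA]; nlinarith [hy.1, hy.2]
    · intro m y hy; have := hcsmall m y hy; simp only; linarith
  set H : ℝ → ℝ := fun x => sInf ((fun p : ℝ × ℝ => p.1 + p.2 * x) '' S) with hH
  have hbdd : ∀ x ∈ Icc (0:ℝ) 1,
      A x ∈ lowerBounds ((fun p : ℝ × ℝ => p.1 + p.2 * x) '' S) := by
    rintro x hx v ⟨p, hp, rfl⟩; exact hp.2.1 x hx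
  have hne : ∀ x : ℝ, ((fun p : ℝ × ℝ => p.1 + p.2 * x) '' S).Nonempty :=
    fun x => ⟨_, Set.mem_image_of_mem _ hone⟩
  have hHle : ∀ p ∈ S, ∀ x ∈ Icc (0:ℝ) 1, H x ≤ p.1 + p.2 * x := by
    intro p hp x hx
    exact csInf_le ⟨A x, hbdd x hx⟩ (Set.mem_image_of_mem _ hp)
  have hHge : ∀ x ∈ Icc (0:ℝ) 1, A x ≤ H x :=
    fun x hx => le_csInf (hne x) (fun v hv => hbdd x hx hv)
  have hHgec : ∀ m, ∀ y ∈ Ioc (0:ℝ) (u m), c m y ≤ H y := by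
    intro m y hy
    refine le_csInf (hne y) ?_
    rintro v ⟨p, hp, rfl⟩
    exact hp.2.2 m y hy
  have hA0 : ∀ x ∈ Icc (0:ℝ) 1, 0 ≤ A x := by
    intro x hx; simp only [hA]; nlinarith [hx.1, hx.2]
  -- property 1
  have gA1 : ∀ x ∈ Icc (0:ℝ) 1, H x ∈ Icc (0:ℝ) 1 := by
    intro x hx
    constructor
    · exact le_trans (hA0 x hx) (hHge x hx)
    · have h := hHle _ hone x hx; simp only at h; linarith
  -- property 2
  have gA2 : ∀ x ∈ Icc (0:ℝ) 1, ∀ y ∈ Icc (0:ℝ) 1, x ≤ y → H x ≤ H y := by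
    intro x hx y hy hxy
    refine le_csInf (hne y) ?_
    rintro v ⟨p, hp, rfl⟩
    dsimp only
    have h1 := hHle p hp x hx
    have h2 : p.2 * x ≤ p.2 * y := mul_le_mul_of_nonneg_left hxy hp.1
    linarith
  -- property 3
  have gA3 : ∀ x ∈ Icc (0:ℝ) 1, ∀ y ∈ Icc (0:ℝ) 1, ∀ t ∈ Icc (0:ℝ) 1,
      t * H x + (1 - t) * H y ≤ H (t * x + (1 - t) * y) := by
    intro x hx y hy t ht
    refine le_csInf (hne _) ?_
    rintro v ⟨p, hp, rfl⟩
    dsimp only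
    have h1 := hHle p hp x hx
    have h2 := hHle p hp y hy
    have h3 : t * H x ≤ t * (p.1 + p.2 * x) := mul_le_mul_of_nonneg_left h1 ht.1
    have h4 : (1 - t) * H y ≤ (1 - t) * (p.1 + p.2 * y) :=
      mul_le_mul_of_nonneg_left h2 (by linarith [ht.2])
    have e : p.1 + p.2 * (t * x + (1 - t) * y)
        = t * (p.1 + p.2 * x) + (1 - t) * (p.1 + p.2 * y) := by ring
    linarith
  -- property 4
  have gA4 : ∀ x ∈ Ioo (0:ℝ) 1, x < H x ∧ H x < 1 := by
    intro x hx
    have hx' : x ∈ Icc (0:ℝ) 1 := ⟨le_of_lt hx.1, le_of_lt hx.2⟩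
    constructor
    · have h1 := hHge x hx'
      have h2 : x < A x := by simp only [hA]; nlinarith [hx.1, hx.2]
      linarith
    · set t₀ : ℝ := max x (1/2) with ht₀
      have ht₀1 : t₀ < 1 := max_lt hx.2 (by norm_num)
      have ht₀x : x ≤ t₀ := le_max_left _ _
      have ht₀h : (1:ℝ)/2 ≤ t₀ := le_max_right _ _
      have hp : ((t₀^2, 2 - 2*t₀) : ℝ × ℝ) ∈ S := by
        refine ⟨by simp only; linarith, ?_, ?_⟩
        · intro y hy; simp only [hA]; nlinarith [sq_nonneg (t₀ - y)]
        · intro m y hy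
          have h4 := hcsmall m y hy
          have h5 : (0:ℝ) ≤ (2 - 2*t₀) * y :=
            mul_nonneg (by linarith) (le_of_lt hy.1)
          simp only
          nlinarith
      have h6 := hHle _ hp x hx'
      simp only at h6
      nlinarith [mul_pos (show (0:ℝ) < 1 - t₀ by linarith)
        (show (0:ℝ) < 1 + t₀ - 2*x by linarith [hx.2])]
  -- property 5
  have gA5 : Tendsto H l (nhds 0) := by
    rw [Metric.tendsto_nhds]
    intro ε hε
    obtain ⟨M, hM⟩ : ∃ M : ℕ, ((1:ℝ)/2)^(M+2) ≤ ε/2 := by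
      obtain ⟨M, hM⟩ := exists_pow_lt_of_lt_one (show (0:ℝ) < ε/2 by linarith)
        (show (1:ℝ)/2 < 1 by norm_num)
      refine ⟨M, le_of_lt (lt_of_le_of_lt ?_ hM)⟩
      exact pow_le_pow_of_le_one (by norm_num) (by norm_num) (by omega)
    set δ' : ℝ := min (u M) (ε/8) with hδ'
    have hδ'pos : 0 < δ' := lt_min (hu0 M) (by linarith)
    have hδ'ε : δ' ≤ ε/8 := min_le_right _ _
    have hp : ((ε/2, δ'⁻¹) : ℝ × ℝ) ∈ S := by
      refine ⟨by positivity, ?_, ?_⟩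
      · intro y hy
        simp only [hA]
        rcases le_or_gt y δ' with h | h
        · have h7 : (0:ℝ) ≤ δ'⁻¹ * y := mul_nonneg (inv_nonneg.mpr hδ'pos.le) hy.1
          nlinarith [hy.1]
        · have h1 : (1:ℝ) ≤ y / δ' := (one_le_div hδ'pos).mpr (le_of_lt h)
          rw [inv_mul_eq_div]
          nlinarith [sq_nonneg (1 - y), hy.2]
      · intro m y hy
        simp only
        rcases le_or_gt y δ' with h | h
        · have key : c m y ≤ ((1:ℝ)/2)^(M+2) := by
            rcases le_or_gt m M with hmM | hmM
            · exact huc M m hmM y ⟨hy.1, h.trans (min_le_left _ _)⟩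
            · exact (huc m m le_rfl y hy).trans
                (pow_le_pow_of_le_one (by norm_num) (by norm_num) (by omega))
          have h7 : (0:ℝ) ≤ δ'⁻¹ * y := mul_nonneg (inv_nonneg.mpr hδ'pos.le) hy.1.le
          linarith [key.trans hM]
        · have h1 : (1:ℝ) ≤ y / δ' := (one_le_div hδ'pos).mpr (le_of_lt h)
          have h8 := hcsmall m y hy
          rw [inv_mul_eq_div]
          linarith
    have hset : Ioc (0:ℝ) (min ((ε/4)*δ') 1) ∈ l :=
      Ioc_mem_nhdsGT (lt_min (mul_pos (by linarith) hδ'pos) one_pos)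
    filter_upwards [hset] with x hx
    have hx1 : x ∈ Icc (0:ℝ) 1 := ⟨le_of_lt hx.1, hx.2.trans (min_le_right _ _)⟩
    have h0 : 0 ≤ H x := le_trans (hA0 x hx1) (hHge x hx1)
    have h1 := hHle _ hp x hx1
    simp only at h1
    have h2 : δ'⁻¹ * x ≤ δ'⁻¹ * ((ε/4)*δ') :=
      mul_le_mul_of_nonneg_left (hx.2.trans (min_le_left _ _)) (by positivity)
    have h3 : δ'⁻¹ * ((ε/4)*δ') = ε/4 := by field_simp
    rw [Real.dist_eq, sub_zero, abs_of_nonneg h0]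
    linarith
  -- key domination
  have hdom : ∀ i n : ℕ, Tendsto (fun x => H x / (g i)^[n] x) l atTop := by
    intro i n
    rw [tendsto_atTop]
    intro b
    set k : ℕ := ⌈b⌉₊ + 1 with hk
    set m : ℕ := Nat.pair (Nat.pair i n) k with hm
    have hum : Ioc (0:ℝ) (u m) ∈ l := Ioc_mem_nhdsGT (hu0 m)
    filter_upwards [hum] with y hy
    have hy1 : y ∈ Ioo (0:ℝ) 1 :=
      ⟨hy.1, lt_of_le_of_lt (hy.2.trans (hu2 m)) (by norm_num)⟩
    have hGy : y ≤ G (Nat.pair i n) y := (hGmem _ y hy1).1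
    have hGpos : 0 < G (Nat.pair i n) y := lt_of_lt_of_le hy.1 hGy
    have hHy : c m y ≤ H y := hHgec m y hy
    have hcy : c m y = (k:ℝ) * G (Nat.pair i n) y := by
      simp only [hc, hm, Nat.unpair_pair]
    have hGid : G (Nat.pair i n) = (g i)^[n] := by
      simp only [hG, Nat.unpair_pair]
    rw [← hGid, le_div_iff₀ hGpos]
    have hbk : b ≤ (k:ℝ) := by
      have := Nat.le_ceil b
      have h9 : (⌈b⌉₊:ℝ) ≤ (k:ℝ) := by exact_mod_cast Nat.le_succ _
      linarith
    have h10 : b * G (Nat.pair i n) y ≤ (k:ℝ) * G (Nat.pair i n) y :=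
      mul_le_mul_of_nonneg_right hbk (le_of_lt hGpos)
    rw [hcy] at hHy
    linarith
  have hratio : Tendsto (fun x => H x / x) l atTop := by
    have := hdom 0 0
    simpa using this
  exact ⟨H, ⟨gA1, gA2, gA3, gA4, gA5, goodAux_ratio gA4 gA5 hratio⟩, hdom⟩

/-- Given `f₀` satisfying (1)–(5), there is a transfinite family `(f_α)_{α < ω₁}` of such
functions with `f_β/f_α^{(n)} → ∞` at `0⁺` for all `α < β < ω₁` and all `n`. -/
theorem exists_omega1_chain_of_goodFn (f₀ : ℝ → ℝ) (h₀ : GoodFn f₀) :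
    ∃ f : Ordinal → ℝ → ℝ, f 0 = f₀ ∧
      (∀ α : Ordinal, α < (Cardinal.aleph 1).ord → GoodFn (f α)) ∧
      (∀ α β : Ordinal, α < β → β < (Cardinal.aleph 1).ord → ∀ n : ℕ,
        Tendsto (fun x => f β x / (f α)^[n] x) (nhdsWithin 0 (Set.Ioi 0)) atTop) := by
  classical
  have dom' : ∀ gs : ℕ → ℝ → ℝ, ∃ H : ℝ → ℝ, GoodFn H ∧
      ∀ j, GoodFn (gs j) → ∀ n : ℕ,
        Tendsto (fun x => H x / (gs j)^[n] x) (nhdsWithin 0 (Set.Ioi 0)) atTop := by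
    intro gs
    obtain ⟨H, hH, hd⟩ := dominate f₀ h₀ (fun j => if GoodFn (gs j) then gs j else f₀)
      (fun j => by by_cases h : GoodFn (gs j) <;> simp [h, h₀])
    refine ⟨H, hH, fun j hj n => ?_⟩
    have := hd j n
    simpa [if_pos hj] using this
  choose build hb1 hb2 using dom'
  have henum : ∀ β : Ordinal, 0 < β → β < (Cardinal.aleph 1).ord →
      ∃ e : ℕ → Ordinal, (∀ j, e j < β) ∧ ∀ α, α < β → ∃ j, e j = α := by
    intro β hβ0 hβ
    have hcard : β.card < Cardinal.aleph 1 := Cardinal.lt_ord.mp hβ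
    have hcnt : (Set.Iio β).Countable := by
      rw [Cardinal.countable_iff_lt_aleph_one, Ordinal.mk_Iio_ordinal]
      exact Cardinal.lift_lt_aleph_one.mpr hcard
    have hc2 : Countable (Set.Iio β) := hcnt.to_subtype
    have hn2 : Nonempty (Set.Iio β) := ⟨⟨0, hβ0⟩⟩
    obtain ⟨s, hs⟩ := exists_surjective_nat (Set.Iio β)
    exact ⟨fun j => (s j).1, fun j => (s j).2, fun α hα => by
      obtain ⟨j, hj⟩ := hs ⟨α, hα⟩; exact ⟨j, congrArg Subtype.val hj⟩⟩
  choose! e he1 he2 using henum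
  set F : Ordinal → ℝ → ℝ := Ordinal.lt_wf.fix (C := fun _ => ℝ → ℝ) (fun β prior =>
    if h : 0 < β ∧ β < (Cardinal.aleph 1).ord then
      build (fun j => prior (e β j) (he1 β h.1 h.2 j)) else f₀) with hFdef
  have hFeq : ∀ β, F β = if h : 0 < β ∧ β < (Cardinal.aleph 1).ord then
      build (fun j => F (e β j)) else f₀ := by
    intro β
    rw [hFdef, WellFounded.fix_eq]
  have hF0 : F 0 = f₀ := by
    rw [hFeq]; simp
  have hGoodAll : ∀ β, GoodFn (F β) := by
    intro β; rw [hFeq]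
    split
    · exact hb1 _
    · exact h₀
  refine ⟨F, hF0, fun α _ => hGoodAll α, ?_⟩
  intro α β hαβ hβ n
  have hβ0 : 0 < β := lt_of_le_of_lt (zero_le (a := α)) hαβ
  obtain ⟨j, hj⟩ := he2 β hβ0 hβ α hαβ
  have hkey := hb2 (fun j => F (e β j)) j (hGoodAll _) n
  rw [hj] at hkey
  rw [hFeq β, dif_pos ⟨hβ0, hβ⟩]
  exact hkey
end
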